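/- Let Ω, ∂Ω, σ, n be as in the context, and let u, v : ℝ^d → ℝ be C² on a neighborhood of the closure of Ω and satisfy −Δu = E·u and −Δv = E·v on Ω with the same energy E ∈ ℝ. Then 2E·∫_Ω u(x)·v(x) dx = ∫_{∂Ω} [ ((d−2)/2)(⟨n(x),∇u(x)⟩v(x) + ⟨n(x),∇v(x)⟩u(x)) + ⟨x,n(x)⟩(E·u(x)v(x) − ⟨∇u(x),∇v(x)⟩) + ⟨x,∇u(x)⟩⟨n(x),∇v(x)⟩ + ⟨x,∇v(x)⟩⟨n(x),∇u(x)⟩ ] dσ(x). -/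

import Mathlib

open MeasureTheory
open scoped RealInnerProductSpace Classical

noncomputable section

/-- The Euclidean Laplacian: the sum of the second partial derivatives. -/
def lap {d : ℕ} (u : EuclideanSpace ℝ (Fin d) → ℝ) (x : EuclideanSpace ℝ (Fin d)) : ℝ :=
  ∑ i, fderiv ℝ (fun y => fderiv ℝ u y (EuclideanSpace.single i (1:ℝ))) x
    (EuclideanSpace.single i (1:ℝ))

/-- The divergence: the sum of the partial derivatives of the components. -/
def divg {d : ℕ} (F : EuclideanSpace ℝ (Fin d) → EuclideanSpace ℝ (Fin d))
    (x : EuclideanSpace ℝ (Fin d)) : ℝ :=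
  ∑ i, fderiv ℝ (fun y => ⟪F y, EuclideanSpace.single i (1:ℝ)⟫) x
    (EuclideanSpace.single i (1:ℝ))

open InnerProductSpace

namespace PZ

variable {d : ℕ}

local notation "E" => EuclideanSpace ℝ (Fin d)
local notation "e" i => EuclideanSpace.single i (1:ℝ)

lemma contDiffOn_gradient {U : Set E} {u : E → ℝ} (hU : IsOpen U)
    (hu : ContDiffOn ℝ 2 u U) : ContDiffOn ℝ 1 (gradient u) U :=
  (toDual ℝ E).symm.contDiff.comp_contDiffOn (hu.fderiv_of_isOpen hU (by norm_num))

lemma fderiv_apply_grad {u : E → ℝ} {x : E} (hu : DifferentiableAt ℝ u x) (w : E) :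
    fderiv ℝ u x w = ⟪gradient u x, w⟫ := by
  rw [hu.hasGradientAt.hasFDerivAt.fderiv, toDual_apply_apply]

lemma fderiv_inner_grad {u : E → ℝ} {x : E} (hgu : DifferentiableAt ℝ (gradient u) x)
    (c w : E) :
    fderiv ℝ (fun y => ⟪gradient u y, c⟫) x w = ⟪fderiv ℝ (gradient u) x w, c⟫ := by
  rw [fderiv_inner_apply ℝ hgu (differentiableAt_const c) w]
  simp

/-- Symmetry of the second derivative, in gradient form. -/
lemma grad_symm {U : Set E} {u : E → ℝ} {x : E} (hU : IsOpen U) (hx : x ∈ U)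
    (hu : ContDiffOn ℝ 2 u U) (a b : E) :
    ⟪fderiv ℝ (gradient u) x a, b⟫ = ⟪fderiv ℝ (gradient u) x b, a⟫ := by
  have hdiff : ∀ y ∈ U, DifferentiableAt ℝ u y := fun y hy =>
    (hu.contDiffAt (hU.mem_nhds hy)).differentiableAt two_ne_zero
  have hf' : ContDiffOn ℝ 1 (fderiv ℝ u) U := hu.fderiv_of_isOpen hU (by norm_num)
  have df' : DifferentiableAt ℝ (fderiv ℝ u) x :=
    (hf'.contDiffAt (hU.mem_nhds hx)).differentiableAt one_ne_zero
  have dgu : DifferentiableAt ℝ (gradient u) x :=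
    ((contDiffOn_gradient hU hu).contDiffAt (hU.mem_nhds hx)).differentiableAt one_ne_zero
  have heq : ∀ a b : E, ⟪fderiv ℝ (gradient u) x a, b⟫ = fderiv ℝ (fderiv ℝ u) x a b := by
    intro a b
    have h2 : (fun y => ⟪gradient u y, b⟫) =ᶠ[nhds x] fun y => fderiv ℝ u y b := by
      filter_upwards [hU.mem_nhds hx] with y hy
      rw [fderiv_apply_grad (hdiff y hy)]
    have h3 : HasFDerivAt (fun y => fderiv ℝ u y b) _ x :=
      df'.hasFDerivAt.clm_apply (hasFDerivAt_const b x)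
    rw [← fderiv_inner_grad dgu b a, h2.fderiv_eq, h3.fderiv]
    simp
  rw [heq, heq]
  exact second_derivative_symmetric_of_eventually
    (by filter_upwards [hU.mem_nhds hx] with y hy using (hdiff y hy).hasFDerivAt)
    df'.hasFDerivAt a b

/-- The Laplacian as the trace of the derivative of the gradient. -/
lemma lap_eq_trace {U : Set E} {u : E → ℝ} {x : E} (hU : IsOpen U) (hx : x ∈ U)
    (hu : ContDiffOn ℝ 2 u U) :
    lap u x = ∑ i, fderiv ℝ (gradient u) x (e i) i := by
  have hdiff : ∀ y ∈ U, DifferentiableAt ℝ u y := fun y hy =>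
    (hu.contDiffAt (hU.mem_nhds hy)).differentiableAt two_ne_zero
  have dgu : DifferentiableAt ℝ (gradient u) x :=
    ((contDiffOn_gradient hU hu).contDiffAt (hU.mem_nhds hx)).differentiableAt one_ne_zero
  unfold lap
  refine Finset.sum_congr rfl fun i _ => ?_
  have hev : (fun y => fderiv ℝ u y (e i)) =ᶠ[nhds x] fun y => ⟪gradient u y, (e i)⟫ := by
    filter_upwards [hU.mem_nhds hx] with y hy
    rw [fderiv_apply_grad (hdiff y hy)]
  rw [hev.fderiv_eq, fderiv_inner_grad dgu]
  simp [EuclideanSpace.inner_single_right]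

lemma sum_coord_inner (p q : E) : ∑ i, p i * q i = ⟪p, q⟫ := by
  simp [PiLp.inner_apply, mul_comm]

/-- Swap lemma for symmetric bilinear forms from second derivatives. -/
lemma swap_sum {G : E → E} (sym : ∀ a b : E, ⟪G a, b⟫ = ⟪G b, a⟫) (p q : E) :
    ∑ i, ⟪p, G (e i)⟫ * q i = ∑ i, ⟪G (e i), q⟫ * p i := by
  have key : ∀ i j : Fin d, G (e i) j = G (e j) i := by
    intro i j
    have := sym (e i) (e j)
    simpa [EuclideanSpace.inner_single_right] using this
  calc ∑ i, ⟪p, G (e i)⟫ * q i = ∑ i, ∑ j, (p j * G (e i) j) * q i := by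
        refine Finset.sum_congr rfl fun i _ => ?_
        rw [← Finset.sum_mul, sum_coord_inner]
    _ = ∑ j, ∑ i, (p j * G (e j) i) * q i := by
        rw [Finset.sum_comm]
        exact Finset.sum_congr rfl fun i _ => Finset.sum_congr rfl fun j _ => by rw [key]
    _ = ∑ j, ⟪G (e j), q⟫ * p j := by
        refine Finset.sum_congr rfl fun j _ => ?_
        rw [show ∑ i, p j * G (e j) i * q i = p j * ∑ i, G (e j) i * q i by
          rw [Finset.mul_sum]; exact Finset.sum_congr rfl fun i _ => by ring]
        rw [show ∑ i, G (e j) i * q i = ⟪G (e j), q⟫ from sum_coord_inner _ _]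
        ring

variable (d) in
/-- The Pohozaev-type vector field. -/
def Pfield (u v : E → ℝ) (En : ℝ) : E → E := fun y =>
  (((d:ℝ) - 2) / 2) • (v y • gradient u y + u y • gradient v y)
    + (⟪y, gradient u y⟫ • gradient v y + ⟪y, gradient v y⟫ • gradient u y)
    + (En * u y * v y - ⟪gradient u y, gradient v y⟫) • y

lemma Pfield_inner (u v : E → ℝ) (En : ℝ) (y c : E) :
    ⟪Pfield d u v En y, c⟫ =
      ((d:ℝ) - 2) / 2 * (v y * ⟪c, gradient u y⟫ + u y * ⟪c, gradient v y⟫)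
        + (⟪y, gradient u y⟫ * ⟪c, gradient v y⟫ + ⟪y, gradient v y⟫ * ⟪c, gradient u y⟫)
        + (En * u y * v y - ⟪gradient u y, gradient v y⟫) * ⟪c, y⟫ := by
  rw [real_inner_comm]
  simp only [Pfield, inner_add_right, real_inner_smul_right]
  try ring

lemma key_fderiv {U : Set E} {u v : E → ℝ} {En : ℝ} {x : E} (hU : IsOpen U) (hx : x ∈ U)
    (hu : ContDiffOn ℝ 2 u U) (hv : ContDiffOn ℝ 2 v U) (c w : E) :
    fderiv ℝ (fun y => ⟪Pfield d u v En y, c⟫) x w =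
      ((d:ℝ) - 2) / 2 * (v x * ⟪c, fderiv ℝ (gradient u) x w⟫ + ⟪c, gradient u x⟫ * ⟪gradient v x, w⟫
          + u x * ⟪c, fderiv ℝ (gradient v) x w⟫ + ⟪c, gradient v x⟫ * ⟪gradient u x, w⟫)
        + ((⟪x, fderiv ℝ (gradient u) x w⟫ + ⟪w, gradient u x⟫) * ⟪c, gradient v x⟫
            + ⟪x, gradient u x⟫ * ⟪c, fderiv ℝ (gradient v) x w⟫
            + (⟪x, fderiv ℝ (gradient v) x w⟫ + ⟪w, gradient v x⟫) * ⟪c, gradient u x⟫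
            + ⟪x, gradient v x⟫ * ⟪c, fderiv ℝ (gradient u) x w⟫)
        + ((En * (⟪gradient u x, w⟫ * v x) + En * (u x * ⟪gradient v x, w⟫)
              - (⟪gradient u x, fderiv ℝ (gradient v) x w⟫
                  + ⟪fderiv ℝ (gradient u) x w, gradient v x⟫)) * ⟪c, x⟫
            + (En * u x * v x - ⟪gradient u x, gradient v x⟫) * ⟪c, w⟫) := by
  have du : DifferentiableAt ℝ u x :=
    (hu.contDiffAt (hU.mem_nhds hx)).differentiableAt two_ne_zero
  have dv : DifferentiableAt ℝ v x :=
    (hv.contDiffAt (hU.mem_nhds hx)).differentiableAt two_ne_zero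
  have Hu : HasFDerivAt u (toDual ℝ E (gradient u x)) x := du.hasGradientAt.hasFDerivAt
  have Hv : HasFDerivAt v (toDual ℝ E (gradient v x)) x := dv.hasGradientAt.hasFDerivAt
  have Hgu : HasFDerivAt (gradient u) (fderiv ℝ (gradient u) x) x :=
    (((contDiffOn_gradient hU hu).contDiffAt (hU.mem_nhds hx)).differentiableAt
      one_ne_zero).hasFDerivAt
  have Hgv : HasFDerivAt (gradient v) (fderiv ℝ (gradient v) x) x :=
    (((contDiffOn_gradient hU hv).contDiffAt (hU.mem_nhds hx)).differentiableAt
      one_ne_zero).hasFDerivAt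
  have hexp : (fun y => ⟪Pfield d u v En y, c⟫) = fun y =>
      ((d:ℝ) - 2) / 2 * (v y * ⟪c, gradient u y⟫ + u y * ⟪c, gradient v y⟫)
        + (⟪y, gradient u y⟫ * ⟪c, gradient v y⟫ + ⟪y, gradient v y⟫ * ⟪c, gradient u y⟫)
        + (En * u y * v y - ⟪gradient u y, gradient v y⟫) * ⟪c, y⟫ :=
    funext fun y => Pfield_inner u v En y c
  have HT : HasFDerivAt (fun y =>
      ((d:ℝ) - 2) / 2 * (v y * ⟪c, gradient u y⟫ + u y * ⟪c, gradient v y⟫)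
        + (⟪y, gradient u y⟫ * ⟪c, gradient v y⟫ + ⟪y, gradient v y⟫ * ⟪c, gradient u y⟫)
        + (En * u y * v y - ⟪gradient u y, gradient v y⟫) * ⟪c, y⟫) _ x :=
    ((((Hv.mul ((hasFDerivAt_const c x).inner ℝ Hgu)).add
        (Hu.mul ((hasFDerivAt_const c x).inner ℝ Hgv))).const_mul (((d:ℝ) - 2) / 2)).add
      ((((hasFDerivAt_id x).inner ℝ Hgu).mul ((hasFDerivAt_const c x).inner ℝ Hgv)).add
        (((hasFDerivAt_id x).inner ℝ Hgv).mul ((hasFDerivAt_const c x).inner ℝ Hgu)))).add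
      (((((hasFDerivAt_const En x).mul Hu).mul Hv).sub (Hgu.inner ℝ Hgv)).mul
        ((hasFDerivAt_const c x).inner ℝ (hasFDerivAt_id x)))
  rw [hexp, HT.fderiv]
  simp only [ContinuousLinearMap.add_apply, ContinuousLinearMap.sub_apply,
    ContinuousLinearMap.smul_apply, ContinuousLinearMap.comp_apply,
    ContinuousLinearMap.prod_apply, fderivInnerCLM_apply, ContinuousLinearMap.zero_apply,
    ContinuousLinearMap.coe_id', id_eq, toDual_apply_apply, inner_zero_left, inner_zero_right,
    smul_eq_mul, add_zero, zero_add, mul_zero, zero_mul, Pi.mul_apply, Pi.sub_apply]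
  ring

/-- The divergence of the Pohozaev field. -/
lemma divg_Pfield {U : Set E} {u v : E → ℝ} {En : ℝ} {x : E} (hU : IsOpen U) (hx : x ∈ U)
    (hu : ContDiffOn ℝ 2 u U) (hv : ContDiffOn ℝ 2 v U)
    (hlu : lap u x = -(En * u x)) (hlv : lap v x = -(En * v x)) (hd : 2 ≤ d) :
    divg (Pfield d u v En) x = 2 * En * (u x * v x) := by
  have symu := grad_symm hU hx hu
  have symv := grad_symm hU hx hv
  set gu := gradient u x with hgu
  set gv := gradient v x with hgv
  set Gu := fderiv ℝ (gradient u) x with hGu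
  set Gv := fderiv ℝ (gradient v) x with hGv
  have tru : ∑ i, Gu (e i) i = -(En * u x) := by
    rw [← hlu, lap_eq_trace hU hx hu]
  have trv : ∑ i, Gv (e i) i = -(En * v x) := by
    rw [← hlv, lap_eq_trace hU hx hv]
  have step1 : divg (Pfield d u v En) x = ∑ i : Fin d,
      (((d:ℝ) - 2) / 2 * (v x * Gu (e i) i + u x * Gv (e i) i)
        + (((d:ℝ) - 2) / 2 * 2 + 2) * (gu i * gv i)
        + (⟪x, Gu (e i)⟫ * gv i - ⟪Gu (e i), gv⟫ * x i)
        + (⟪x, Gv (e i)⟫ * gu i - ⟪Gv (e i), gu⟫ * x i)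
        + ⟪x, gu⟫ * Gv (e i) i + ⟪x, gv⟫ * Gu (e i) i
        + En * v x * (gu i * x i) + En * u x * (gv i * x i)
        + (En * u x * v x - ⟪gu, gv⟫)) := by
    unfold divg
    refine Finset.sum_congr rfl fun i _ => ?_
    rw [key_fderiv hU hx hu hv]
    simp only [← hgu, ← hgv, ← hGu, ← hGv, EuclideanSpace.inner_single_left,
      EuclideanSpace.inner_single_right, conj_trivial, one_mul, mul_one,
      real_inner_comm gv (Gu (e i)), real_inner_comm gu (Gv (e i)),
      EuclideanSpace.single_apply, if_pos]
    ring
  rw [step1]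
  simp only [Finset.sum_add_distrib, Finset.sum_sub_distrib, ← Finset.mul_sum,
    Finset.sum_const, Finset.card_univ, Fintype.card_fin, nsmul_eq_mul]
  rw [swap_sum symu x gv, swap_sum symv x gu, tru, trv, sum_coord_inner gu gv,
    sum_coord_inner gu x, sum_coord_inner gv x, real_inner_comm x gu, real_inner_comm x gv]
  ring

end PZ

theorem boundary_identity_equal_energies
    (d : ℕ) (hd : 2 ≤ d) (Ω : Set (EuclideanSpace ℝ (Fin d)))
    (hΩo : IsOpen Ω) (hΩb : Bornology.IsBounded Ω)
    (n : EuclideanSpace ℝ (Fin d) → EuclideanSpace ℝ (Fin d))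
    (hGG : ∀ F : EuclideanSpace ℝ (Fin d) → EuclideanSpace ℝ (Fin d),
      (∃ U, IsOpen U ∧ closure Ω ⊆ U ∧ ContDiffOn ℝ 1 F U) →
      (∫ x in Ω, divg F x) = ∫ x in frontier Ω, ⟪F x, n x⟫ ∂(μH[(d:ℝ) - 1]))
    (u v : EuclideanSpace ℝ (Fin d) → ℝ) (En : ℝ)
    (hur : ∃ U, IsOpen U ∧ closure Ω ⊆ U ∧ ContDiffOn ℝ 2 u U) (hvr : ∃ U, IsOpen U ∧ closure Ω ⊆ U ∧ ContDiffOn ℝ 2 v U)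
    (hHu : ∀ x ∈ Ω, -lap u x = En * u x) (hHv : ∀ x ∈ Ω, -lap v x = En * v x) :
    2 * En * (∫ x in Ω, u x * v x)
      = ∫ x in frontier Ω,
          (((d : ℝ) - 2) / 2 * (⟪n x, gradient u x⟫ * v x + ⟪n x, gradient v x⟫ * u x)
            + ⟪x, n x⟫ * (En * u x * v x - ⟪gradient u x, gradient v x⟫)
            + ⟪x, gradient u x⟫ * ⟪n x, gradient v x⟫
            + ⟪x, gradient v x⟫ * ⟪n x, gradient u x⟫) ∂(μH[(d:ℝ) - 1]) := by
  obtain ⟨U₁, hU₁o, hU₁c, hu⟩ := hur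
  obtain ⟨U₂, hU₂o, hU₂c, hv⟩ := hvr
  set U := U₁ ∩ U₂ with hUdef
  have hUo : IsOpen U := hU₁o.inter hU₂o
  have hUc : closure Ω ⊆ U := Set.subset_inter hU₁c hU₂c
  have hu' : ContDiffOn ℝ 2 u U := hu.mono Set.inter_subset_left
  have hv' : ContDiffOn ℝ 2 v U := hv.mono Set.inter_subset_right
  have hΩU : Ω ⊆ U := subset_closure.trans hUc
  have hgu1 := PZ.contDiffOn_gradient hUo hu'
  have hgv1 := PZ.contDiffOn_gradient hUo hv'
  have hu1 : ContDiffOn ℝ 1 u U := hu'.of_le one_le_two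
  have hv1 : ContDiffOn ℝ 1 v U := hv'.of_le one_le_two
  have hF1 : ContDiffOn ℝ 1 (PZ.Pfield d u v En) U := by
    refine ContDiffOn.add (ContDiffOn.add ?_ ?_) ?_
    · exact ((hv1.smul hgu1).add (hu1.smul hgv1)).const_smul _
    · exact ((ContDiffOn.inner ℝ contDiffOn_id hgu1).smul hgv1).add
        ((ContDiffOn.inner ℝ contDiffOn_id hgv1).smul hgu1)
    · exact (((contDiffOn_const.mul hu1).mul hv1).sub
        (ContDiffOn.inner ℝ hgu1 hgv1)).smul contDiffOn_id
  have hkey := hGG (PZ.Pfield d u v En) ⟨U, hUo, hUc, hF1⟩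
  have hdiv : ∀ x ∈ Ω, divg (PZ.Pfield d u v En) x = 2 * En * (u x * v x) := fun x hx =>
    PZ.divg_Pfield hUo (hΩU hx) hu' hv' (by linarith [hHu x hx]) (by linarith [hHv x hx]) hd
  have hbd : ∀ x, ⟪PZ.Pfield d u v En x, n x⟫ =
      ((d : ℝ) - 2) / 2 * (⟪n x, gradient u x⟫ * v x + ⟪n x, gradient v x⟫ * u x)
        + ⟪x, n x⟫ * (En * u x * v x - ⟪gradient u x, gradient v x⟫)
        + ⟪x, gradient u x⟫ * ⟪n x, gradient v x⟫
        + ⟪x, gradient v x⟫ * ⟪n x, gradient u x⟫ := by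
    intro x
    rw [PZ.Pfield_inner, real_inner_comm (n x) x]
    ring
  calc 2 * En * (∫ x in Ω, u x * v x) = ∫ x in Ω, 2 * En * (u x * v x) :=
        (integral_const_mul _ _).symm
    _ = ∫ x in Ω, divg (PZ.Pfield d u v En) x :=
        (setIntegral_congr_fun hΩo.measurableSet fun x hx => (hdiv x hx).symm)
    _ = ∫ x in frontier Ω, ⟪PZ.Pfield d u v En x, n x⟫ ∂(μH[(d:ℝ) - 1]) := hkey
    _ = _ := by
        refine integral_congr_ae (Filter.Eventually.of_forall fun x => ?_)
        exact hbd x
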